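/- arXiv:0911.4727 — 4 statements merged into one kernel-verified Lean document; each statement's English description precedes it below -/
import Mathlib

section
/- Let D ⊆ K be coherent relative to (K,C). Then D is maximal among sets coherent relative to (K,C) — i.e., every set D' coherent relative to (K,C) with D ⊆ D' satisfies D = D' — if and only if for every nonzero f ∈ K, f ∉ D implies −f ∈ D. -/
variable {Ω : Type*}

/-- A bounded real-valued function on `Ω` (a gamble). -/
def Bdd (f : Ω → ℝ) : Prop := ∃ M : ℝ, ∀ ω, |f ω| ≤ M

/-- The positive hull of a set of gambles: all finite strictly positive linear combinations. -/
def posi (A : Set (Ω → ℝ)) : Set (Ω → ℝ) :=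
  {g | ∃ n : ℕ, 0 < n ∧ ∃ (c : Fin n → ℝ) (f : Fin n → Ω → ℝ),
    (∀ k, 0 < c k) ∧ (∀ k, f k ∈ A) ∧ g = ∑ k, c k • f k}

/-- `K` is a linear subspace of the space of gambles. -/
def IsLinSubspace (K : Set (Ω → ℝ)) : Prop :=
  (0 : Ω → ℝ) ∈ K ∧ (∀ f ∈ K, ∀ g ∈ K, f + g ∈ K) ∧ ∀ f ∈ K, ∀ c : ℝ, c • f ∈ K

/-- `D ⊆ K` is coherent relative to `(K, C)`:  `0 ∉ D`; every `f ∈ K` with `f ≻ 0`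
(i.e. `f ∈ C` and `f ≠ 0`) belongs to `D`; and `D` is closed under positive scaling
and addition. -/
def CoherentRel (K C D : Set (Ω → ℝ)) : Prop :=
  D ⊆ K ∧ (0 : Ω → ℝ) ∉ D ∧ (∀ f ∈ K, f ∈ C → f ≠ 0 → f ∈ D) ∧
  (∀ f ∈ D, ∀ c : ℝ, 0 < c → c • f ∈ D) ∧ ∀ f ∈ D, ∀ g ∈ D, f + g ∈ D

/-- `D` avoids non-positivity relative to `(K, C)`: no `f ∈ posi D` satisfies `f ⪯ 0`
(i.e. `-f ∈ C`). -/
def AvoidsNonpos (C D : Set (Ω → ℝ)) : Prop := ∀ f ∈ posi D, ¬ -f ∈ C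

theorem maximality_characterisation [Nonempty Ω] (K C D : Set (Ω → ℝ))
    (hKG : ∀ f ∈ K, Bdd f) (hK : IsLinSubspace K)
    (hCK : C ⊆ K) (hCne : C ≠ K) (hCcone : posi C = C) (hC0 : (0 : Ω → ℝ) ∈ C)
    (hD : CoherentRel K C D) :
    (∀ D' : Set (Ω → ℝ), CoherentRel K C D' → D ⊆ D' → D = D') ↔
      ∀ f ∈ K, f ≠ 0 → f ∉ D → -f ∈ D := by
  obtain ⟨hDK, hD0, hDC, hDs, hDa⟩ := hD
  obtain ⟨hK0, hKadd, hKsmul⟩ := hK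
  constructor
  · intro hmax f hfK hf0 hfD
    by_contra hnf
    -- extend D by f
    set D' : Set (Ω → ℝ) :=
      D ∪ {h | ∃ l : ℝ, 0 < l ∧ (h = l • f ∨ ∃ g ∈ D, h = l • f + g)} with hD'
    have hDsub : D ⊆ D' := Set.subset_union_left
    have hcoh : CoherentRel K C D' := by
      refine ⟨?_, ?_, ?_, ?_, ?_⟩
      · rintro h (hh | ⟨l, hl, (rfl | ⟨g, hg, rfl⟩)⟩)
        · exact hDK hh
        · exact hKsmul f hfK l
        · exact hKadd _ (hKsmul f hfK l) _ (hDK hg)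
      · rintro (h0 | ⟨l, hl, (h0 | ⟨g, hg, h0⟩)⟩)
        · exact hD0 h0
        · rcases smul_eq_zero.mp h0.symm with h | h
          · exact hl.ne' h
          · exact hf0 h
        · apply hnf
          have hmem : (l⁻¹ : ℝ) • g ∈ D := hDs g hg l⁻¹ (inv_pos.mpr hl)
          have hge : g = -(l • f) := eq_neg_of_add_eq_zero_right h0.symm
          have he : (l⁻¹ : ℝ) • g = -f := by
            rw [hge, smul_neg, smul_smul, inv_mul_cancel₀ hl.ne', one_smul]
          rwa [he] at hmem
      · intro h hhK hhC hh0
        exact hDsub (hDC h hhK hhC hh0)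
      · rintro h (hh | ⟨l, hl, (rfl | ⟨g, hg, rfl⟩)⟩) c hc
        · exact hDsub (hDs h hh c hc)
        · exact Or.inr ⟨c * l, mul_pos hc hl, Or.inl (smul_smul c l f)⟩
        · refine Or.inr ⟨c * l, mul_pos hc hl, Or.inr ⟨c • g, hDs g hg c hc, ?_⟩⟩
          rw [smul_add, smul_smul]
      · rintro h₁ (hh₁ | ⟨l, hl, (rfl | ⟨g, hg, rfl⟩)⟩) h₂
          (hh₂ | ⟨m, hm, (rfl | ⟨g', hg', rfl⟩)⟩)
        · exact hDsub (hDa _ hh₁ _ hh₂)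
        · exact Or.inr ⟨m, hm, Or.inr ⟨h₁, hh₁, (add_comm _ _)⟩⟩
        · exact Or.inr ⟨m, hm, Or.inr ⟨h₁ + g', hDa _ hh₁ _ hg', by abel⟩⟩
        · exact Or.inr ⟨l, hl, Or.inr ⟨h₂, hh₂, rfl⟩⟩
        · exact Or.inr ⟨l + m, by positivity, Or.inl (by rw [add_smul])⟩
        · exact Or.inr ⟨l + m, by positivity, Or.inr ⟨g', hg', by rw [add_smul]; abel⟩⟩
        · exact Or.inr ⟨l, hl, Or.inr ⟨g + h₂, hDa _ hg _ hh₂, by abel⟩⟩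
        · exact Or.inr ⟨l + m, by positivity, Or.inr ⟨g, hg, by rw [add_smul]; abel⟩⟩
        · exact Or.inr ⟨l + m, by positivity,
            Or.inr ⟨g + g', hDa _ hg _ hg', by rw [add_smul]; abel⟩⟩
    have hfD' : f ∈ D' := Or.inr ⟨1, one_pos, Or.inl (one_smul ℝ f).symm⟩
    rw [hmax D' hcoh hDsub] at hfD
    exact hfD hfD'
  · intro hcomp D' hcoh hsub
    obtain ⟨hD'K, hD'0, _, _, hD'a⟩ := hcoh
    apply Set.Subset.antisymm hsub
    intro f hfD'
    by_contra hfD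
    have hf0 : f ≠ 0 := fun h => hD'0 (h ▸ hfD')
    have : -f ∈ D := hcomp f (hD'K hfD') hf0 hfD
    have : f + -f ∈ D' := hD'a f hfD' (-f) (hsub this)
    rw [add_neg_cancel] at this
    exact hD'0 this
end

section
/- For any A ⊆ K, the (K,C)-natural extension E_{(K,C)}(A) — the intersection of all sets coherent relative to (K,C) that include A — equals the intersection of all maximal sets coherent relative to (K,C) that include A (both intersections taken to be K when empty). -/
variable {Ω : Type*}

/-- The `(K, C)`-natural extension of `A`: the intersection of all sets coherent relative
to `(K, C)` that include `A` (taken within `K`, so it equals `K` when there are none). -/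
def natexRel (K C A : Set (Ω → ℝ)) : Set (Ω → ℝ) :=
  {f | f ∈ K ∧ ∀ D : Set (Ω → ℝ), CoherentRel K C D → A ⊆ D → f ∈ D}

/-- Every coherent set is contained in a maximal coherent set (Zorn). -/
lemma exists_maximal_coherent (K C D : Set (Ω → ℝ)) (hD : CoherentRel K C D) :
    ∃ M, D ⊆ M ∧ CoherentRel K C M ∧
      ∀ M' : Set (Ω → ℝ), CoherentRel K C M' → M ⊆ M' → M = M' := by
  have hzorn : ∀ c ⊆ {E | CoherentRel K C E}, IsChain (· ⊆ ·) c → c.Nonempty →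
      ∃ ub ∈ {E | CoherentRel K C E}, ∀ s ∈ c, s ⊆ ub := by
    intro c hcS hchain hcne
    refine ⟨⋃₀ c, ⟨?_, ?_, ?_, ?_, ?_⟩, fun s hs => Set.subset_sUnion_of_mem hs⟩
    · rintro g ⟨s, hs, hg⟩
      exact (hcS hs).1 hg
    · rintro ⟨s, hs, hg⟩
      exact (hcS hs).2.1 hg
    · intro g hgK hgC hg0
      obtain ⟨s, hs⟩ := hcne
      exact ⟨s, hs, (hcS hs).2.2.1 g hgK hgC hg0⟩
    · rintro g ⟨s, hs, hg⟩ e he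
      exact ⟨s, hs, (hcS hs).2.2.2.1 g hg e he⟩
    · rintro g ⟨s, hs, hg⟩ h ⟨t, ht, hh⟩
      rcases hchain.total hs ht with hst | hts
      · exact ⟨t, ht, (hcS ht).2.2.2.2 g (hst hg) h hh⟩
      · exact ⟨s, hs, (hcS hs).2.2.2.2 g hg h (hts hh)⟩
  obtain ⟨M, hDM, hM⟩ := zorn_subset_nonempty {E | CoherentRel K C E} hzorn D hD
  refine ⟨M, hDM, hM.1, fun M' hM' hMM' => Set.Subset.antisymm hMM' ?_⟩
  exact hM.2 hM' hMM'

theorem natex_eq_inter_maximal [Nonempty Ω] (K C A : Set (Ω → ℝ))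
    (hKG : ∀ f ∈ K, Bdd f) (hK : IsLinSubspace K)
    (hCK : C ⊆ K) (hCne : C ≠ K) (hCcone : posi C = C) (hC0 : (0 : Ω → ℝ) ∈ C)
    (hA : A ⊆ K) :
    natexRel K C A =
      {f | f ∈ K ∧ ∀ D : Set (Ω → ℝ), CoherentRel K C D →
        (∀ D' : Set (Ω → ℝ), CoherentRel K C D' → D ⊆ D' → D = D') →
        A ⊆ D → f ∈ D} := by
  ext f
  simp only [natexRel, Set.mem_setOf_eq]
  constructor
  · rintro ⟨hfK, h⟩
    exact ⟨hfK, fun D hD _ hAD => h D hD hAD⟩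
  · rintro ⟨hfK, h⟩
    refine ⟨hfK, fun D hD hAD => ?_⟩
    by_contra hfD
    obtain ⟨hDK, hD0, hDC, hDs, hDa⟩ := hD
    rcases eq_or_ne f 0 with rfl | hf0
    · -- f = 0: any maximal extension of D contains 0, contradicting coherence
      obtain ⟨M, hDM, hM, hMmax⟩ :=
        exists_maximal_coherent K C D ⟨hDK, hD0, hDC, hDs, hDa⟩
      exact hM.2.1 (h M hM hMmax (hAD.trans hDM))
    · -- f ≠ 0: extend D by -f
      set D' : Set (Ω → ℝ) :=
        D ∪ {g | ∃ c : ℝ, 0 < c ∧ (g = c • (-f) ∨ ∃ d ∈ D, g = c • (-f) + d)} with hD'def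
      have hnfK : -f ∈ K := by
        have := hK.2.2 f hfK (-1)
        simpa using this
      have hDsub : D ⊆ D' := Set.subset_union_left
      have hnf : -f ∈ D' := Or.inr ⟨1, one_pos, Or.inl (one_smul ℝ (-f)).symm⟩
      have hD' : CoherentRel K C D' := by
        refine ⟨?_, ?_, ?_, ?_, ?_⟩
        · rintro g (hg | ⟨c, hc, hg | ⟨d, hd, hg⟩⟩)
          · exact hDK hg
          · exact hg ▸ hK.2.2 _ hnfK c
          · exact hg ▸ hK.2.1 _ (hK.2.2 _ hnfK c) _ (hDK hd)
        · rintro (hg | ⟨c, hc, hg | ⟨d, hd, hg⟩⟩)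
          · exact hD0 hg
          · apply hf0
            have : c • (-f) = 0 := hg.symm
            have h2 : (-f : Ω → ℝ) = 0 := by
              rcases smul_eq_zero.mp this with h | h
              · exact absurd h hc.ne'
              · exact h
            simpa [neg_eq_zero] using h2
          · apply hfD
            have hdcf : d = c • f := by
              have : (0 : Ω → ℝ) = c • (-f) + d := hg
              rw [smul_neg] at this
              linear_combination (norm := module) -this
            have := hDs d hd (1/c) (by positivity)
            rw [hdcf, smul_smul, one_div, inv_mul_cancel₀ hc.ne', one_smul] at this
            exact this
        · intro g hgK hgC hg0
          exact hDsub (hDC g hgK hgC hg0)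
        · rintro g (hg | ⟨c, hc, hg | ⟨d, hd, hg⟩⟩) e he
          · exact hDsub (hDs g hg e he)
          · exact Or.inr ⟨e * c, by positivity, Or.inl (by rw [hg, smul_smul])⟩
          · exact Or.inr ⟨e * c, by positivity,
              Or.inr ⟨e • d, hDs d hd e he, by rw [hg, smul_add, smul_smul]⟩⟩
        · rintro g (hg | ⟨c, hc, hg | ⟨d, hd, hg⟩⟩) g' (hg' | ⟨c', hc', hg' | ⟨d', hd', hg'⟩⟩)
          · exact hDsub (hDa g hg g' hg')
          · exact Or.inr ⟨c', hc', Or.inr ⟨g, hg, by rw [hg']; module⟩⟩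
          · exact Or.inr ⟨c', hc', Or.inr ⟨d' + g, hDa d' hd' g hg, by rw [hg']; module⟩⟩
          · exact Or.inr ⟨c, hc, Or.inr ⟨g', hg', by rw [hg]⟩⟩
          · exact Or.inr ⟨c + c', by positivity, Or.inl (by rw [hg, hg']; module)⟩
          · exact Or.inr ⟨c + c', by positivity, Or.inr ⟨d', hd', by rw [hg, hg']; module⟩⟩
          · exact Or.inr ⟨c, hc, Or.inr ⟨d + g', hDa d hd g' hg', by rw [hg]; module⟩⟩
          · exact Or.inr ⟨c + c', by positivity, Or.inr ⟨d, hd, by rw [hg, hg']; module⟩⟩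
          · exact Or.inr ⟨c + c', by positivity,
              Or.inr ⟨d + d', hDa d hd d' hd', by rw [hg, hg']; module⟩⟩
      obtain ⟨M, hDM, hM, hMmax⟩ := exists_maximal_coherent K C D' hD'
      have hfM : f ∈ M := h M hM hMmax ((hAD.trans hDsub).trans hDM)
      have h0M : (0 : Ω → ℝ) ∈ M := by
        have := hM.2.2.2.2 f hfM (-f) (hDM hnf)
        simpa using this
      exact hM.2.1 h0M
end

section
/- Let D be a coherent set of gambles on Ω, and let W(D) := {f ∈ G(Ω) : f + f' ∈ D for all f' ∈ D} be the associated set of weakly desirable gambles. Then for all gambles f, f₁, f₂ and all real λ ≥ 0: (WD1) if f < 0 then f ∉ W(D); (WD2) if f ≥ 0 then f ∈ W(D); (WD3) if f ∈ W(D) then λf ∈ W(D); (WD4) if f₁, f₂ ∈ W(D) then f₁ + f₂ ∈ W(D). -/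
variable {Ω : Type*}

/-- A coherent set of desirable gambles on `Ω`:  its elements are gambles (bounded);
`0 ∉ D`; every gamble `f > 0` (pointwise `≥ 0` and nonzero) belongs to `D`; and `D` is
closed under positive scaling and addition. -/
def Coherent (D : Set (Ω → ℝ)) : Prop :=
  (∀ f ∈ D, Bdd f) ∧ (0 : Ω → ℝ) ∉ D ∧
  (∀ f : Ω → ℝ, Bdd f → 0 ≤ f → f ≠ 0 → f ∈ D) ∧
  (∀ f ∈ D, ∀ c : ℝ, 0 < c → c • f ∈ D) ∧ ∀ f ∈ D, ∀ g ∈ D, f + g ∈ D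

/-- The set of weakly desirable gambles associated with `D`. -/
def weakly (D : Set (Ω → ℝ)) : Set (Ω → ℝ) := {f | Bdd f ∧ ∀ g ∈ D, f + g ∈ D}

theorem weak_desirability_properties [Nonempty Ω] (D : Set (Ω → ℝ)) (hD : Coherent D) :
    (∀ f : Ω → ℝ, Bdd f → f ≤ 0 → f ≠ 0 → f ∉ weakly D) ∧
    (∀ f : Ω → ℝ, Bdd f → 0 ≤ f → f ∈ weakly D) ∧
    (∀ f ∈ weakly D, ∀ c : ℝ, 0 ≤ c → c • f ∈ weakly D) ∧
    ∀ f ∈ weakly D, ∀ g ∈ weakly D, f + g ∈ weakly D := by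
  obtain ⟨hbdd, h0, hpos, hscale, hadd⟩ := hD
  have wd2 : ∀ f : Ω → ℝ, Bdd f → 0 ≤ f → f ∈ weakly D := by
    intro f hb hf
    refine ⟨hb, fun g hg => ?_⟩
    rcases eq_or_ne f 0 with rfl | hne
    · simpa using hg
    · exact hadd f (hpos f hb hf hne) g hg
  refine ⟨?_, wd2, ?_, ?_⟩
  · intro f hb hf hne ⟨_, hmem⟩
    have hnegb : Bdd (-f) := by
      obtain ⟨M, hM⟩ := hb
      exact ⟨M, fun ω => by simpa using hM ω⟩
    have hneg : (-f) ∈ D := hpos (-f) hnegb (by intro ω; simpa using hf ω)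
      (by simpa [neg_eq_zero] using hne)
    have : f + (-f) ∈ D := hmem (-f) hneg
    simp at this
    exact h0 this
  · intro f ⟨hb, hmem⟩ c hc
    rcases eq_or_lt_of_le hc with rfl | hc
    · simpa using wd2 0 ⟨0, by simp⟩ le_rfl
    · refine ⟨?_, fun g hg => ?_⟩
      · obtain ⟨M, hM⟩ := hb
        refine ⟨c * M, fun ω => ?_⟩
        simp only [Pi.smul_apply, smul_eq_mul, abs_mul, abs_of_pos hc]
        exact mul_le_mul_of_nonneg_left (hM ω) hc.le
      · have h1 : c⁻¹ • g ∈ D := hscale g hg c⁻¹ (by positivity)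
        have h2 : f + c⁻¹ • g ∈ D := hmem _ h1
        have h3 : c • (f + c⁻¹ • g) ∈ D := hscale _ h2 c hc
        have : c • (f + c⁻¹ • g) = c • f + g := by
          rw [smul_add, smul_smul, mul_inv_cancel₀ hc.ne', one_smul]
        rwa [this] at h3
  · intro f ⟨hbf, hf⟩ g ⟨hbg, hg⟩
    refine ⟨?_, fun h hh => ?_⟩
    · obtain ⟨M, hM⟩ := hbf; obtain ⟨N, hN⟩ := hbg
      exact ⟨M + N, fun ω => (abs_add_le _ _).trans (add_le_add (hM ω) (hN ω))⟩
    · have := hf (g + h) (hg h hh)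
      rwa [← add_assoc] at this
end

section
/- Let D be a coherent set of gambles on Ω, let W(D) := {f ∈ G(Ω) : f + f' ∈ D for all f' ∈ D}, and define P_D(f) := sup{μ ∈ ℝ : f − μ ∈ D} for every gamble f. Then: P_D(f) is a (finite) real number satisfying inf f ≤ P_D(f) ≤ sup f for every gamble f; P_D(f) = P_{W(D)}(f) for every gamble f; and P_D(f) ≥ 0 for all f ∈ W(D). Moreover, a real-valued functional P on G(Ω) equals P_D for some coherent set D (i.e., P is a coherent lower prevision) if and only if for all gambles f, f₁, f₂ and all real λ ≥ 0: (P1) P(f) ≥ inf f; (P2) P(f₁ + f₂) ≥ P(f₁) + P(f₂); (P3) P(λf) = λP(f). -/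
variable {Ω : Type*}

/-- The lower prevision associated with a set `A` of gambles:
`P_A(f) = sup {μ : f - μ ∈ A}`. -/
noncomputable def lpr (A : Set (Ω → ℝ)) (f : Ω → ℝ) : ℝ :=
  sSup {μ : ℝ | (f - fun _ => μ) ∈ A}

section AuxLemmas

lemma bdd_const (c : ℝ) : Bdd (fun _ : Ω => c) := ⟨|c|, fun _ => le_rfl⟩

lemma bdd_add {f g : Ω → ℝ} (hf : Bdd f) (hg : Bdd g) : Bdd (f + g) := by
  obtain ⟨M, hM⟩ := hf; obtain ⟨N, hN⟩ := hg
  exact ⟨M + N, fun ω => (abs_add_le _ _).trans (add_le_add (hM ω) (hN ω))⟩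

lemma bdd_neg {f : Ω → ℝ} (hf : Bdd f) : Bdd (-f) := by
  obtain ⟨M, hM⟩ := hf
  exact ⟨M, fun ω => by simpa using hM ω⟩

lemma bdd_smul {f : Ω → ℝ} (hf : Bdd f) (c : ℝ) : Bdd (c • f) := by
  obtain ⟨M, hM⟩ := hf
  exact ⟨|c| * M, fun ω => by
    simp only [Pi.smul_apply, smul_eq_mul, abs_mul]
    exact mul_le_mul_of_nonneg_left (hM ω) (abs_nonneg c)⟩

lemma bdd_sub_const {f : Ω → ℝ} (hf : Bdd f) (c : ℝ) : Bdd (f - fun _ => c) :=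
  sub_eq_add_neg f (fun _ => c) ▸ bdd_add hf (bdd_neg (bdd_const c))

lemma bdd_bddAbove {f : Ω → ℝ} (hf : Bdd f) : BddAbove (Set.range f) := by
  obtain ⟨M, hM⟩ := hf
  exact ⟨M, by rintro x ⟨ω, rfl⟩; exact (abs_le.1 (hM ω)).2⟩

lemma bdd_bddBelow {f : Ω → ℝ} (hf : Bdd f) : BddBelow (Set.range f) := by
  obtain ⟨M, hM⟩ := hf
  exact ⟨-M, by rintro x ⟨ω, rfl⟩; exact (abs_le.1 (hM ω)).1⟩

variable [Nonempty Ω]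

lemma coh_sup_nonneg {D : Set (Ω → ℝ)} (hD : Coherent D) {g : Ω → ℝ} (hg : g ∈ D) :
    0 ≤ sSup (Set.range g) := by
  obtain ⟨hBdd, h0, hpos, hsmul, hadd⟩ := hD
  by_contra h
  push_neg at h
  have hb := bdd_bddAbove (hBdd g hg)
  have hle : ∀ ω, g ω ≤ sSup (Set.range g) := fun ω => le_csSup hb ⟨ω, rfl⟩
  have hneg : (-g) ∈ D := by
    refine hpos _ (bdd_neg (hBdd g hg)) (fun ω => ?_) (fun he => ?_)
    · simpa using (hle ω).trans h.le
    · have := congrFun he (Classical.arbitrary Ω)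
      simp only [Pi.neg_apply, Pi.zero_apply, neg_eq_zero] at this
      exact absurd ((hle _).trans_lt h) (by rw [this]; exact lt_irrefl 0 ∘ id) -- fix
  have : g + (-g) ∈ D := hadd g hg _ hneg
  simp only [add_neg_cancel] at this
  exact h0 this

lemma lpr_mem_of_lt_inf {D : Set (Ω → ℝ)} (hD : Coherent D) {f : Ω → ℝ} (hf : Bdd f)
    {μ : ℝ} (hμ : μ < sInf (Set.range f)) : (f - fun _ => μ) ∈ D := by
  obtain ⟨hBdd, h0, hpos, hsmul, hadd⟩ := hD
  have hlb : ∀ ω, sInf (Set.range f) ≤ f ω := fun ω => csInf_le (bdd_bddBelow hf) ⟨ω, rfl⟩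
  refine hpos _ (bdd_sub_const hf μ) (fun ω => ?_) (fun he => ?_)
  · simp only [Pi.sub_apply, Pi.zero_apply]
    linarith [hlb ω]
  · have := congrFun he (Classical.arbitrary Ω)
    simp only [Pi.sub_apply, Pi.zero_apply] at this
    linarith [hlb (Classical.arbitrary Ω)]

lemma lpr_set_nonempty {D : Set (Ω → ℝ)} (hD : Coherent D) {f : Ω → ℝ} (hf : Bdd f) :
    {μ : ℝ | (f - fun _ => μ) ∈ D}.Nonempty :=
  ⟨sInf (Set.range f) - 1, lpr_mem_of_lt_inf hD hf (by linarith)⟩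

lemma lpr_set_le_sup {D : Set (Ω → ℝ)} (hD : Coherent D) {f : Ω → ℝ} (hf : Bdd f)
    {μ : ℝ} (hμ : (f - fun _ => μ) ∈ D) : μ ≤ sSup (Set.range f) := by
  have h1 : 0 ≤ sSup (Set.range (f - fun _ => μ)) := coh_sup_nonneg hD hμ
  have h2 : sSup (Set.range (f - fun _ => μ)) ≤ sSup (Set.range f) - μ := by
    refine csSup_le (Set.range_nonempty _) ?_
    rintro x ⟨ω, rfl⟩
    have : f ω ≤ sSup (Set.range f) := le_csSup (bdd_bddAbove hf) ⟨ω, rfl⟩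
    simp only [Pi.sub_apply]
    linarith
  linarith

lemma lpr_set_bddAbove {D : Set (Ω → ℝ)} (hD : Coherent D) {f : Ω → ℝ} (hf : Bdd f) :
    BddAbove {μ : ℝ | (f - fun _ => μ) ∈ D} :=
  ⟨sSup (Set.range f), fun μ hμ => lpr_set_le_sup hD hf hμ⟩

lemma lpr_ge_inf {D : Set (Ω → ℝ)} (hD : Coherent D) {f : Ω → ℝ} (hf : Bdd f) :
    sInf (Set.range f) ≤ lpr D f := by
  refine le_of_forall_pos_le_add fun ε hε => ?_
  have : sInf (Set.range f) - ε ∈ {μ : ℝ | (f - fun _ => μ) ∈ D} :=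
    lpr_mem_of_lt_inf hD hf (by linarith)
  have h := le_csSup (lpr_set_bddAbove hD hf) this
  unfold lpr
  linarith

lemma lpr_le_sup {D : Set (Ω → ℝ)} (hD : Coherent D) {f : Ω → ℝ} (hf : Bdd f) :
    lpr D f ≤ sSup (Set.range f) :=
  csSup_le (lpr_set_nonempty hD hf) fun _ hμ => lpr_set_le_sup hD hf hμ

lemma const_mem {D : Set (Ω → ℝ)} (hD : Coherent D) {c : ℝ} (hc : 0 < c) :
    (fun _ : Ω => c) ∈ D := by
  refine hD.2.2.1 _ (bdd_const c) (fun ω => hc.le) (fun he => ?_)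
  have := congrFun he (Classical.arbitrary Ω)
  simp only [Pi.zero_apply] at this
  linarith

lemma subset_weakly {D : Set (Ω → ℝ)} (hD : Coherent D) : D ⊆ weakly D := fun f hf =>
  ⟨hD.1 f hf, fun g hg => hD.2.2.2.2 f hf g hg⟩

lemma weakly_mem_le {D : Set (Ω → ℝ)} (hD : Coherent D) {f : Ω → ℝ} (hf : Bdd f)
    {μ : ℝ} (hμ : (f - fun _ => μ) ∈ weakly D) : μ ≤ lpr D f := by
  refine le_of_forall_pos_le_add fun ε hε => ?_
  have hmem : (f - fun _ => (μ - ε)) ∈ D := by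
    have := hμ.2 _ (const_mem hD hε)
    convert this using 1
    funext ω; simp [Pi.sub_apply]; ring
  have h := le_csSup (lpr_set_bddAbove hD hf) hmem
  unfold lpr
  linarith

lemma lpr_weakly_eq {D : Set (Ω → ℝ)} (hD : Coherent D) {f : Ω → ℝ} (hf : Bdd f) :
    lpr D f = lpr (weakly D) f := by
  refine le_antisymm ?_ ?_
  · exact csSup_le_csSup ⟨lpr D f, fun μ hμ => weakly_mem_le hD hf hμ⟩
      (lpr_set_nonempty hD hf) (fun μ hμ => subset_weakly hD hμ)
  · exact csSup_le ((lpr_set_nonempty hD hf).mono fun μ hμ => subset_weakly hD hμ)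
      fun μ hμ => weakly_mem_le hD hf hμ

lemma lpr_weakly_nonneg {D : Set (Ω → ℝ)} (hD : Coherent D) {f : Ω → ℝ}
    (hf : f ∈ weakly D) : 0 ≤ lpr D f := by
  have hb : Bdd f := hf.1
  rw [lpr_weakly_eq hD hb]
  refine le_csSup ⟨lpr D f, fun μ hμ => weakly_mem_le hD hb hμ⟩ ?_
  show (f - fun _ => (0:ℝ)) ∈ weakly D
  have : (f - fun _ => (0:ℝ)) = f := by funext ω; simp
  rw [this]; exact hf

lemma lpr_superadd {D : Set (Ω → ℝ)} (hD : Coherent D) {f g : Ω → ℝ}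
    (hf : Bdd f) (hg : Bdd g) : lpr D f + lpr D g ≤ lpr D (f + g) := by
  have key : ∀ μ ∈ {μ : ℝ | (f - fun _ => μ) ∈ D}, ∀ ν ∈ {ν : ℝ | (g - fun _ => ν) ∈ D},
      μ + ν ≤ lpr D (f + g) := by
    intro μ hμ ν hν
    refine le_csSup (lpr_set_bddAbove hD (bdd_add hf hg)) ?_
    show ((f + g) - fun _ => (μ + ν)) ∈ D
    have : ((f + g) - fun _ => (μ + ν)) = (f - fun _ => μ) + (g - fun _ => ν) := by
      funext ω; simp [Pi.sub_apply, Pi.add_apply]; ring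
    rw [this]
    exact hD.2.2.2.2 _ hμ _ hν
  have h1 : lpr D f ≤ lpr D (f + g) - lpr D g := by
    refine csSup_le (lpr_set_nonempty hD hf) fun μ hμ => ?_
    have h2 : lpr D g ≤ lpr D (f + g) - μ :=
      csSup_le (lpr_set_nonempty hD hg) fun ν hν => by linarith [key μ hμ ν hν]
    linarith
  linarith

lemma lpr_smul_le {D : Set (Ω → ℝ)} (hD : Coherent D) {f : Ω → ℝ}
    (hf : Bdd f) {c : ℝ} (hc : 0 < c) : c * lpr D f ≤ lpr D (c • f) := by
  rw [mul_comm, ← le_div_iff₀ hc]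
  refine csSup_le (lpr_set_nonempty hD hf) fun μ hμ => ?_
  rw [le_div_iff₀ hc, mul_comm]
  refine le_csSup (lpr_set_bddAbove hD (bdd_smul hf c)) ?_
  show ((c • f) - fun _ => c * μ) ∈ D
  have : ((c • f) - fun _ => c * μ) = c • (f - fun _ => μ) := by
    funext ω; simp [Pi.sub_apply, Pi.smul_apply, smul_eq_mul]; ring
  rw [this]
  exact hD.2.2.2.1 _ hμ c hc

lemma lpr_smul_eq {D : Set (Ω → ℝ)} (hD : Coherent D) {f : Ω → ℝ}
    (hf : Bdd f) {c : ℝ} (hc : 0 < c) : lpr D (c • f) = c * lpr D f := by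
  refine le_antisymm ?_ (lpr_smul_le hD hf hc)
  have h := lpr_smul_le hD (bdd_smul hf c) (c := c⁻¹) (by positivity)
  rw [smul_smul, inv_mul_cancel₀ hc.ne', one_smul] at h
  have := mul_le_mul_of_nonneg_left h hc.le
  rwa [← mul_assoc, mul_inv_cancel₀ hc.ne', one_mul] at this

lemma lpr_zero {D : Set (Ω → ℝ)} (hD : Coherent D) : lpr D (0 : Ω → ℝ) = 0 := by
  have h0 : Bdd (0 : Ω → ℝ) := ⟨0, fun ω => by simp⟩
  have hr : Set.range (0 : Ω → ℝ) = {0} := by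
    ext x; simp [eq_comm]
  have h1 := lpr_ge_inf hD h0
  have h2 := lpr_le_sup hD h0
  rw [hr] at h1 h2
  simp only [csInf_singleton, csSup_singleton] at h1 h2
  linarith

section Backward

variable {P : (Ω → ℝ) → ℝ}
  (h1 : ∀ f : Ω → ℝ, Bdd f → sInf (Set.range f) ≤ P f)
  (h2 : ∀ f g : Ω → ℝ, Bdd f → Bdd g → P f + P g ≤ P (f + g))
  (h3 : ∀ f : Ω → ℝ, Bdd f → ∀ c : ℝ, 0 ≤ c → P (c • f) = c * P f)

include h3 in
lemma P_zero : P (0 : Ω → ℝ) = 0 := by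
  have h0 : Bdd (0 : Ω → ℝ) := ⟨0, fun ω => by simp⟩
  have := h3 0 h0 0 le_rfl
  rwa [zero_smul, zero_mul] at this

include h1 h2 h3 in
lemma P_le_sup {f : Ω → ℝ} (hf : Bdd f) : P f ≤ sSup (Set.range f) := by
  have hnf : Bdd (-f) := bdd_neg hf
  have hsum := h2 f (-f) hf hnf
  rw [add_neg_cancel, P_zero h3] at hsum
  have hinf : -sSup (Set.range f) ≤ sInf (Set.range (-f)) := by
    refine le_csInf (Set.range_nonempty _) ?_
    rintro x ⟨ω, rfl⟩
    have : f ω ≤ sSup (Set.range f) := le_csSup (bdd_bddAbove hf) ⟨ω, rfl⟩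
    simp only [Pi.neg_apply]
    linarith
  have := h1 (-f) hnf
  linarith

include h1 h2 h3 in
lemma P_const (c : ℝ) : P (fun _ : Ω => c) = c := by
  have hb := bdd_const (Ω := Ω) c
  have hr : Set.range (fun _ : Ω => c) = {c} := by ext x; simp [eq_comm]
  have hlo := h1 _ hb
  have hhi := P_le_sup h1 h2 h3 hb
  rw [hr] at hlo hhi
  simp only [csInf_singleton, csSup_singleton] at hlo hhi
  linarith

include h1 h2 h3 in
lemma P_sub_const {f : Ω → ℝ} (hf : Bdd f) (μ : ℝ) :
    P (f - fun _ => μ) = P f - μ := by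
  have hb : Bdd (f - fun _ => μ) := bdd_sub_const hf μ
  have e1 : (f - fun _ => μ) + (fun _ => μ) = f := by funext ω; simp
  have e2 : f + (fun _ : Ω => -μ) = f - fun _ => μ := by
    funext ω; simp [Pi.add_apply, Pi.sub_apply]; ring
  have ha := h2 _ _ hb (bdd_const μ)
  rw [e1, P_const h1 h2 h3] at ha
  have hb' := h2 f _ hf (bdd_const (-μ))
  rw [e2, P_const h1 h2 h3] at hb'
  linarith

/-- The canonical coherent set built from `P`. -/
def Dof (P : (Ω → ℝ) → ℝ) : Set (Ω → ℝ) :=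
  {f | Bdd f ∧ ((0 ≤ f ∧ f ≠ 0) ∨ 0 < P f)}

include h1 in
lemma P_nonneg_of_nonneg {f : Ω → ℝ} (hf : Bdd f) (h : 0 ≤ f) : 0 ≤ P f := by
  refine le_trans ?_ (h1 f hf)
  refine le_csInf (Set.range_nonempty _) ?_
  rintro x ⟨ω, rfl⟩
  exact h ω

include h1 h2 h3 in
lemma Dof_coherent : Coherent (Dof P) := by
  refine ⟨fun f hf => hf.1, ?_, ?_, ?_, ?_⟩
  · rintro ⟨_, ⟨_, hne⟩ | hpos⟩
    · exact hne rfl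
    · rw [P_zero h3] at hpos; exact lt_irrefl 0 hpos
  · exact fun f hb h0 hne => ⟨hb, Or.inl ⟨h0, hne⟩⟩
  · rintro f ⟨hb, hf⟩ c hc
    refine ⟨bdd_smul hb c, ?_⟩
    rcases hf with ⟨h0, hne⟩ | hpos
    · refine Or.inl ⟨fun ω => by simpa using mul_nonneg hc.le (h0 ω), fun he => hne ?_⟩
      funext ω
      have := congrFun he ω
      simp only [Pi.smul_apply, smul_eq_mul, Pi.zero_apply] at this ⊢
      exact (mul_eq_zero.1 this).resolve_left hc.ne'
    · refine Or.inr ?_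
      rw [h3 f hb c hc.le]
      positivity
  · rintro f ⟨hbf, hf⟩ g ⟨hbg, hg⟩
    refine ⟨bdd_add hbf hbg, ?_⟩
    rcases hf with ⟨hf0, hfne⟩ | hfpos
    · rcases hg with ⟨hg0, hgne⟩ | hgpos
      · refine Or.inl ⟨fun ω => add_nonneg (hf0 ω) (hg0 ω), fun he => hfne ?_⟩
        funext ω
        have hfg := congrFun he ω
        simp only [Pi.add_apply, Pi.zero_apply] at hfg
        have hfω : (0:ℝ) ≤ f ω := hf0 ω
        have hgω : (0:ℝ) ≤ g ω := hg0 ω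
        simp only [Pi.zero_apply]
        linarith
      · refine Or.inr ?_
        have := h2 f g hbf hbg
        have hPf := P_nonneg_of_nonneg h1 hbf hf0
        linarith
    · refine Or.inr ?_
      have := h2 f g hbf hbg
      rcases hg with ⟨hg0, _⟩ | hgpos
      · have hPg := P_nonneg_of_nonneg h1 hbg hg0
        linarith
      · linarith

include h1 h2 h3 in
lemma lpr_Dof {f : Ω → ℝ} (hf : Bdd f) : P f = lpr (Dof P) f := by
  have hbound : ∀ μ ∈ {μ : ℝ | (f - fun _ => μ) ∈ Dof P}, μ ≤ P f := by
    rintro μ (⟨_, ⟨h0, _⟩ | hpos⟩)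
    · refine le_trans ?_ (h1 f hf)
      refine le_csInf (Set.range_nonempty _) ?_
      rintro x ⟨ω, rfl⟩
      have := h0 ω
      simp only [Pi.sub_apply, Pi.zero_apply] at this
      linarith
    · rw [P_sub_const h1 h2 h3 hf] at hpos
      linarith
  have hmem : ∀ ε : ℝ, 0 < ε → (P f - ε) ∈ {μ : ℝ | (f - fun _ => μ) ∈ Dof P} := by
    intro ε hε
    refine ⟨bdd_sub_const hf _, Or.inr ?_⟩
    rw [P_sub_const h1 h2 h3 hf]
    linarith
  refine le_antisymm ?_ (csSup_le ⟨P f - 1, hmem 1 one_pos⟩ hbound)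
  refine le_of_forall_pos_le_add fun ε hε => ?_
  have := le_csSup ⟨P f, hbound⟩ (hmem ε hε)
  unfold lpr
  linarith

end Backward

end AuxLemmas

theorem lpr_of_coherent_set [Nonempty Ω] :
    (∀ D : Set (Ω → ℝ), Coherent D →
      (∀ f : Ω → ℝ, Bdd f →
        {μ : ℝ | (f - fun _ => μ) ∈ D}.Nonempty ∧
        BddAbove {μ : ℝ | (f - fun _ => μ) ∈ D} ∧
        sInf (Set.range f) ≤ lpr D f ∧ lpr D f ≤ sSup (Set.range f)) ∧
      (∀ f : Ω → ℝ, Bdd f → lpr D f = lpr (weakly D) f) ∧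
      ∀ f ∈ weakly D, 0 ≤ lpr D f) ∧
    ∀ P : (Ω → ℝ) → ℝ,
      ((∃ D : Set (Ω → ℝ), Coherent D ∧ ∀ f : Ω → ℝ, Bdd f → P f = lpr D f) ↔
        ((∀ f : Ω → ℝ, Bdd f → sInf (Set.range f) ≤ P f) ∧
         (∀ f g : Ω → ℝ, Bdd f → Bdd g → P f + P g ≤ P (f + g)) ∧
         ∀ f : Ω → ℝ, Bdd f → ∀ c : ℝ, 0 ≤ c → P (c • f) = c * P f)) := by
  constructor
  · intro D hD
    refine ⟨fun f hf => ⟨lpr_set_nonempty hD hf, lpr_set_bddAbove hD hf,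
      lpr_ge_inf hD hf, lpr_le_sup hD hf⟩,
      fun f hf => lpr_weakly_eq hD hf, fun f hf => lpr_weakly_nonneg hD hf⟩
  · intro P
    constructor
    · rintro ⟨D, hD, hP⟩
      refine ⟨fun f hf => ?_, fun f g hf hg => ?_, fun f hf c hc => ?_⟩
      · rw [hP f hf]; exact lpr_ge_inf hD hf
      · rw [hP f hf, hP g hg, hP (f + g) (bdd_add hf hg)]
        exact lpr_superadd hD hf hg
      · rcases eq_or_lt_of_le hc with rfl | hc'
        · have h0 : Bdd (0 : Ω → ℝ) := ⟨0, fun ω => by simp⟩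
          rw [zero_smul, hP 0 h0, lpr_zero hD, zero_mul]
        · rw [hP (c • f) (bdd_smul hf c), hP f hf]
          exact lpr_smul_eq hD hf hc'
    · rintro ⟨h1, h2, h3⟩
      exact ⟨Dof P, Dof_coherent h1 h2 h3, fun f hf => lpr_Dof h1 h2 h3 hf⟩
end
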